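/- Let N ≥ 1 be a power of two, R = ℤ[X]/(X^N + 1), and for 0 ≤ t < N let σ_t : R → R be the ring homomorphism determined by X ↦ X^{2t+1}. Then for every m ∈ R (with power-basis coordinates m_0, …, m_{N−1} ∈ ℤ) and every j with 1 ≤ j ≤ N−1, one has Σ_{t=0}^{N−1} σ_t(X^{j}·m) = −N·m_{N−j} in R. -/

import Mathlib

open Polynomial Finset

/-- `Rq N` is the ring `ℤ[X]/(X^N + 1)`. -/
abbrev Rq (N : ℕ) : Type := AdjoinRoot ((X : ℤ[X]) ^ N + 1)

/-- The image of the indeterminate `X` in `ℤ[X]/(X^N + 1)`. -/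
noncomputable def rx (N : ℕ) : Rq N := AdjoinRoot.root _

lemma rq_monic (N : ℕ) (hN1 : 1 ≤ N) : ((X : ℤ[X]) ^ N + 1).Monic := by
  apply monic_X_pow_add
  have h : (0 : WithBot ℕ) < (N : ℕ) := by exact_mod_cast hN1
  exact lt_of_le_of_lt Polynomial.degree_one_le h

lemma rq_prime (N : ℕ) (hN : ∃ κ : ℕ, N = 2 ^ κ) : Prime ((X : ℤ[X]) ^ N + 1) := by
  obtain ⟨κ, rfl⟩ := hN
  have h : ((X : ℤ[X]) ^ (2 ^ κ) + 1) = cyclotomic (2 ^ (κ + 1)) ℤ := by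
    rw [cyclotomic_prime_pow_eq_geom_sum Nat.prime_two]
    rw [Finset.sum_range_succ, Finset.sum_range_one, pow_zero, pow_one, add_comm]
  rw [h]
  exact (UniqueFactorizationMonoid.irreducible_iff_prime).mp
    (cyclotomic.irreducible (pow_pos (by norm_num) _))

theorem stmt3 (N : ℕ) (hN1 : 1 ≤ N) (hN : ∃ κ : ℕ, N = 2 ^ κ)
    (σ : ℕ → (Rq N →+* Rq N))
    (hσ : ∀ t < N, σ t (rx N) = rx N ^ (2 * t + 1))
    (m : Rq N) (c : ℕ → ℤ)
    (hm : m = ∑ i ∈ Finset.range N, c i • rx N ^ i)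
    (j : ℕ) (hj1 : 1 ≤ j) (hj2 : j ≤ N - 1) :
    ∑ t ∈ Finset.range N, σ t (rx N ^ j * m)
      = (-(N : ℤ) * c (N - j)) • (1 : Rq N) := by
  have hmon := rq_monic N hN1
  haveI : IsDomain (Rq N) := AdjoinRoot.isDomain_of_prime (rq_prime N hN)
  set x : Rq N := rx N with hxdef
  have hNj1 : 1 ≤ N - j := by omega
  have hNj2 : N - j < N := by omega
  -- x ^ N = -1
  have hxN : x ^ N = -1 := by
    have h := AdjoinRoot.mk_self (f := (X : ℤ[X]) ^ N + 1)
    rw [map_add, map_pow, AdjoinRoot.mk_X, map_one] at h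
    have h' : x ^ N + 1 = 0 := h
    linear_combination h'
  have hx2N : x ^ (2 * N) = 1 := by
    rw [two_mul, pow_add, hxN]; ring
  -- power basis facts
  set pb : PowerBasis ℤ (Rq N) := AdjoinRoot.powerBasis' hmon with hpb
  have hdim : pb.dim = N := by
    have h : ((X : ℤ[X]) ^ N + 1).natDegree = N := by
      rw [← Polynomial.C_1, Polynomial.natDegree_X_pow_add_C]
    simpa [hpb] using h
  have hbas : ∀ (a : ℕ) (ha : a < N),
      x ^ a = pb.basis ⟨a, lt_of_lt_of_eq ha hdim.symm⟩ := by
    intro a ha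
    rw [pb.basis_eq_pow]
    rfl
  have hrepr : ∀ (a : ℕ) (ha : a < N),
      pb.basis.repr (x ^ a) = Finsupp.single ⟨a, lt_of_lt_of_eq ha hdim.symm⟩ 1 := by
    intro a ha
    rw [hbas a ha, Module.Basis.repr_self]
  -- -1 ≠ 1
  have hneg1 : (-1 : Rq N) ≠ 1 := by
    intro h
    have h0 : (0:ℕ) < N := hN1
    have h1 : pb.basis.repr (-(x ^ 0)) = pb.basis.repr (x ^ 0) := by
      rw [pow_zero, h]
    rw [map_neg, hrepr 0 h0] at h1
    have h2 := DFunLike.congr_fun h1 ⟨0, lt_of_lt_of_eq h0 hdim.symm⟩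
    simp at h2
  -- x ^ a ≠ 1 for 0 < a < N
  have hne1 : ∀ a : ℕ, 0 < a → a < N → x ^ a ≠ 1 := by
    intro a ha0 haN h
    have h1 : pb.basis.repr (x ^ a) = pb.basis.repr (x ^ 0) := by rw [h, pow_zero]
    rw [hrepr a haN, hrepr 0 (by omega)] at h1
    have h2 := DFunLike.congr_fun h1 ⟨a, lt_of_lt_of_eq haN hdim.symm⟩
    have hne : (⟨0, lt_of_lt_of_eq (by omega : 0 < N) hdim.symm⟩ : Fin pb.dim)
        ≠ ⟨a, lt_of_lt_of_eq haN hdim.symm⟩ := by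
      simp only [ne_eq, Fin.mk.injEq]; omega
    rw [Finsupp.single_eq_same, Finsupp.single_eq_of_ne' hne] at h2
    exact one_ne_zero h2
  -- x ^ a ≠ -1 for 0 < a < N
  have hne2 : ∀ a : ℕ, 0 < a → a < N → x ^ a ≠ -1 := by
    intro a ha0 haN h
    have h1 : pb.basis.repr (x ^ a) = pb.basis.repr (-(x ^ 0)) := by rw [h, pow_zero]
    rw [map_neg, hrepr a haN, hrepr 0 (by omega)] at h1
    have h2 := DFunLike.congr_fun h1 ⟨a, lt_of_lt_of_eq haN hdim.symm⟩
    have hne : (⟨0, lt_of_lt_of_eq (by omega : 0 < N) hdim.symm⟩ : Fin pb.dim)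
        ≠ ⟨a, lt_of_lt_of_eq haN hdim.symm⟩ := by
      simp only [ne_eq, Fin.mk.injEq]; omega
    rw [Finsupp.neg_apply, Finsupp.single_eq_of_ne' hne] at h2
    simp at h2
  -- x ^ e ≠ 1 for 0 < e < 2N
  have horder : ∀ e : ℕ, 0 < e → e < 2 * N → x ^ e ≠ 1 := by
    intro e he0 he2N h
    rcases lt_trichotomy e N with hlt | heq | hgt
    · exact hne1 e he0 hlt h
    · rw [heq, hxN] at h; exact hneg1 h
    · obtain ⟨a, rfl⟩ : ∃ a, e = N + a := ⟨e - N, by omega⟩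
      rw [pow_add, hxN] at h
      have h3 : x ^ a = -1 := by linear_combination -h
      exact hne2 a (by omega) (by omega) h3
  -- key lemma: the twisted sum vanishes for k ≠ N
  have hkey : ∀ k : ℕ, 0 < k → k < 2 * N → k ≠ N →
      ∑ t ∈ Finset.range N, x ^ ((2 * t + 1) * k) = 0 := by
    intro k hk0 hk2N hkN
    have hr : x ^ (2 * k) ≠ 1 := by
      have hmod : x ^ (2 * k) = x ^ (2 * k % (2 * N)) := by
        conv_lhs => rw [← Nat.div_add_mod (2 * k) (2 * N)]
        rw [pow_add, pow_mul, hx2N, one_pow, one_mul]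
      rw [hmod]
      apply horder
      · have hnd : ¬ (2 * N ∣ 2 * k) := by
          rw [Nat.mul_dvd_mul_iff_left (by norm_num : 0 < 2)]
          rintro ⟨d, hd⟩
          have hd1 : 1 ≤ d := Nat.one_le_iff_ne_zero.mpr (by rintro rfl; omega)
          have hd2 : d < 2 := by nlinarith
          interval_cases d <;> omega
        omega
      · exact Nat.mod_lt _ (by omega)
    have hgeom := geom_sum_mul (x ^ (2 * k)) N
    have hrN : (x ^ (2 * k)) ^ N = 1 := by
      rw [← pow_mul, show 2 * k * N = 2 * N * k by ring, pow_mul, hx2N, one_pow]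
    rw [hrN, sub_self] at hgeom
    have hsum0 : ∑ i ∈ Finset.range N, (x ^ (2 * k)) ^ i = 0 := by
      rcases mul_eq_zero.mp hgeom with h | h
      · exact h
      · exact absurd (sub_eq_zero.mp h) hr
    calc ∑ t ∈ Finset.range N, x ^ ((2 * t + 1) * k)
        = ∑ t ∈ Finset.range N, x ^ k * (x ^ (2 * k)) ^ t := by
          apply Finset.sum_congr rfl
          intro t _
          rw [← pow_mul, ← pow_add, show (2 * t + 1) * k = k + 2 * k * t by ring]
      _ = x ^ k * ∑ t ∈ Finset.range N, (x ^ (2 * k)) ^ t := by rw [Finset.mul_sum]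
      _ = 0 := by rw [hsum0, mul_zero]
  -- rewrite each summand
  have hterm : ∀ t ∈ Finset.range N,
      σ t (x ^ j * m) = ∑ i ∈ Finset.range N, c i • x ^ ((2 * t + 1) * (j + i)) := by
    intro t ht
    rw [Finset.mem_range] at ht
    rw [hm, map_mul, map_pow, hσ t ht, map_sum, Finset.mul_sum]
    apply Finset.sum_congr rfl
    intro i _
    rw [map_zsmul, map_pow, hσ t ht, mul_smul_comm, ← pow_mul, ← pow_mul, ← pow_add,
      show (2 * t + 1) * j + (2 * t + 1) * i = (2 * t + 1) * (j + i) by ring]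
  rw [Finset.sum_congr rfl hterm, Finset.sum_comm]
  rw [Finset.sum_eq_single (N - j)]
  · have hNj : j + (N - j) = N := by omega
    rw [hNj]
    have hconst : ∀ t ∈ Finset.range N, c (N - j) • x ^ ((2 * t + 1) * N)
        = c (N - j) • (-1 : Rq N) := by
      intro t _
      rw [show (2 * t + 1) * N = N * (2 * t + 1) by ring, pow_mul, hxN,
        Odd.neg_one_pow ⟨t, by ring⟩]
    rw [Finset.sum_congr rfl hconst, Finset.sum_const, Finset.card_range]
    simp only [nsmul_eq_mul, zsmul_eq_mul]
    push_cast
    ring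
  · intro i hi hineq
    rw [← Finset.smul_sum, hkey (j + i) (by omega) (by
      rw [Finset.mem_range] at hi; omega) (by omega), smul_zero]
  · intro h
    exact absurd (Finset.mem_range.mpr hNj2) h
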